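/- Let X be a nonnegative integrable martingale-terminal random variable with x₀ = E[X] = 1, and suppose P(K) = E[(K-X)^+] > 0 for 0 < K < 1. Define G(K) = K·P(1/K) for K > 1, and suppose m = P(X = 0) ∈ (0,1). Then for the Black–Scholes call function C_BS(K,σ) = N(d₁) - K·N(d₂) with d₁ = (-log K + σ²T/2)/(σ√T), d₂ = d₁ - σ√T, and any fixed T > 0, the implied volatility I_G(K) (defined by C_BS(K, I_G(K)) = G(K)) exists for all K ≥ 1, and satisfies I_C(K) = I_G(1/K) for 0 < K ≤ 1, where I_C is defined by C_BS(K, I_C(K)) = E[(X-K)^+]. -/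

import Mathlib

open Real Set MeasureTheory Filter Topology

noncomputable def stdNormalCDF (x : ℝ) : ℝ :=
  (1 / Real.sqrt (2 * Real.pi)) * ∫ y in Set.Iic x, Real.exp (-(y ^ 2) / 2)

/-- Black–Scholes call price with x₀ = 1, maturity T, strike K, volatility σ. -/
noncomputable def CBS (T K σ : ℝ) : ℝ :=
  stdNormalCDF ((-Real.log K + σ ^ 2 * T / 2) / (σ * Real.sqrt T))
    - K * stdNormalCDF ((-Real.log K + σ ^ 2 * T / 2) / (σ * Real.sqrt T) - σ * Real.sqrt T)

lemma gauss_eq : (fun y : ℝ => Real.exp (-(y ^ 2) / 2)) = fun y => Real.exp (-(1/2:ℝ) * y ^ 2) := by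
  funext y; ring_nf

lemma gauss_integrable : Integrable (fun y : ℝ => Real.exp (-(y ^ 2) / 2)) := by
  rw [gauss_eq]; exact integrable_exp_neg_mul_sq (by norm_num)

lemma gauss_total : ∫ y : ℝ, Real.exp (-(y ^ 2) / 2) = Real.sqrt (2 * Real.pi) := by
  rw [gauss_eq, integral_gaussian]
  congr 1
  ring

lemma sqrt_two_pi_pos : 0 < Real.sqrt (2 * Real.pi) :=
  Real.sqrt_pos.2 (by positivity)

lemma stdNormalCDF_eq (x : ℝ) :
    stdNormalCDF x = (1 / Real.sqrt (2 * Real.pi)) *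
      ((∫ y in Set.Iic (0:ℝ), Real.exp (-(y ^ 2) / 2)) + ∫ y in (0:ℝ)..x, Real.exp (-(y ^ 2) / 2)) := by
  rw [stdNormalCDF]
  congr 1
  rw [← intervalIntegral.integral_Iic_sub_Iic gauss_integrable.integrableOn
    gauss_integrable.integrableOn]
  ring

lemma stdNormalCDF_hasDerivAt (x : ℝ) :
    HasDerivAt stdNormalCDF ((1 / Real.sqrt (2 * Real.pi)) * Real.exp (-(x ^ 2) / 2)) x := by
  have hc : Continuous (fun y : ℝ => Real.exp (-(y ^ 2) / 2)) := by continuity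
  have h : HasDerivAt (fun t => ∫ y in (0:ℝ)..t, Real.exp (-(y ^ 2) / 2))
      (Real.exp (-(x ^ 2) / 2)) x :=
    intervalIntegral.integral_hasDerivAt_right gauss_integrable.intervalIntegrable
      (hc.aestronglyMeasurable.stronglyMeasurableAtFilter) hc.continuousAt
  have h2 := ((h.const_add (∫ y in Set.Iic (0:ℝ), Real.exp (-(y ^ 2) / 2))).const_mul
    (1 / Real.sqrt (2 * Real.pi)))
  have hfun : stdNormalCDF = fun t => (1 / Real.sqrt (2 * Real.pi)) *
      ((∫ y in Set.Iic (0:ℝ), Real.exp (-(y ^ 2) / 2)) + ∫ y in (0:ℝ)..t, Real.exp (-(y ^ 2) / 2)) :=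
    funext stdNormalCDF_eq
  rw [hfun]
  exact h2

lemma stdNormalCDF_continuous : Continuous stdNormalCDF := by
  have : Differentiable ℝ stdNormalCDF := fun x => (stdNormalCDF_hasDerivAt x).differentiableAt
  exact this.continuous

lemma stdNormalCDF_neg (x : ℝ) : stdNormalCDF (-x) = 1 - stdNormalCDF x := by
  have h1 : ∫ y in Set.Iic (-x), Real.exp (-(y ^ 2) / 2)
      = ∫ y in Set.Ioi x, Real.exp (-(y ^ 2) / 2) := by
    have := integral_comp_neg_Iic (-x) (fun y => Real.exp (-(y ^ 2) / 2))
    simp only [neg_neg] at this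
    rw [← this]
    congr 1
    funext y
    ring_nf
  have h2 : (∫ y in Set.Iic x, Real.exp (-(y ^ 2) / 2))
      + ∫ y in Set.Ioi x, Real.exp (-(y ^ 2) / 2) = Real.sqrt (2 * Real.pi) := by
    rw [← gauss_total]
    exact intervalIntegral.integral_Iic_add_Ioi gauss_integrable.integrableOn gauss_integrable.integrableOn
  have hcinv : 1 / Real.sqrt (2 * Real.pi) * Real.sqrt (2 * Real.pi) = 1 :=
    one_div_mul_cancel sqrt_two_pi_pos.ne'
  rw [stdNormalCDF, stdNormalCDF, h1]
  linear_combination (1 / Real.sqrt (2 * Real.pi)) * h2 + hcinv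

lemma stdNormalCDF_tendsto_atTop : Tendsto stdNormalCDF atTop (𝓝 1) := by
  have h := MeasureTheory.intervalIntegral_tendsto_integral_Ioi (0:ℝ)
    (f := fun y => Real.exp (-(y ^ 2) / 2)) (μ := volume) gauss_integrable.integrableOn
    (tendsto_id (α := ℝ))
  have h2 : Tendsto stdNormalCDF atTop
      (𝓝 ((1 / Real.sqrt (2 * Real.pi)) * ((∫ y in Set.Iic (0:ℝ), Real.exp (-(y ^ 2) / 2))
        + ∫ y in Set.Ioi (0:ℝ), Real.exp (-(y ^ 2) / 2)))) := by
    have := (h.const_add (∫ y in Set.Iic (0:ℝ), Real.exp (-(y ^ 2) / 2))).const_mul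
      (1 / Real.sqrt (2 * Real.pi))
    exact this.congr (fun x => (stdNormalCDF_eq x).symm)
  have h3 : (1 / Real.sqrt (2 * Real.pi)) * ((∫ y in Set.Iic (0:ℝ), Real.exp (-(y ^ 2) / 2))
      + ∫ y in Set.Ioi (0:ℝ), Real.exp (-(y ^ 2) / 2)) = 1 := by
    rw [intervalIntegral.integral_Iic_add_Ioi gauss_integrable.integrableOn gauss_integrable.integrableOn,
      gauss_total]
    exact one_div_mul_cancel sqrt_two_pi_pos.ne'
  rwa [h3] at h2

lemma stdNormalCDF_tendsto_atBot : Tendsto stdNormalCDF atBot (𝓝 0) := by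
  have h := MeasureTheory.intervalIntegral_tendsto_integral_Iic (0:ℝ)
    (f := fun y => Real.exp (-(y ^ 2) / 2)) (μ := volume) gauss_integrable.integrableOn
    (tendsto_id (α := ℝ))
  have key : ∀ x : ℝ, stdNormalCDF x = (1 / Real.sqrt (2 * Real.pi)) *
      ((∫ y in Set.Iic (0:ℝ), Real.exp (-(y ^ 2) / 2)) - ∫ y in x..(0:ℝ), Real.exp (-(y ^ 2) / 2)) := by
    intro x
    rw [stdNormalCDF_eq, intervalIntegral.integral_symm]
    ring
  have h2 : Tendsto stdNormalCDF atBot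
      (𝓝 ((1 / Real.sqrt (2 * Real.pi)) * ((∫ y in Set.Iic (0:ℝ), Real.exp (-(y ^ 2) / 2))
        - ∫ y in Set.Iic (0:ℝ), Real.exp (-(y ^ 2) / 2)))) := by
    have := ((h.const_sub (∫ y in Set.Iic (0:ℝ), Real.exp (-(y ^ 2) / 2)))).const_mul
      (1 / Real.sqrt (2 * Real.pi))
    exact this.congr (fun x => (key x).symm)
  simpa using h2

lemma CBS_hasDerivAt {T K : ℝ} (hT : 0 < T) (hK : 0 < K) {σ : ℝ} (hσ : 0 < σ) :
    HasDerivAt (fun s => CBS T K s)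
      (K * ((1 / Real.sqrt (2 * Real.pi)) *
        Real.exp (-(((-Real.log K + σ ^ 2 * T / 2) / (σ * Real.sqrt T) - σ * Real.sqrt T)) ^ 2 / 2))
        * Real.sqrt T) σ := by
  have hsT : 0 < σ * Real.sqrt T := by positivity
  have hu : HasDerivAt (fun s : ℝ => -Real.log K + s ^ 2 * T / 2) (2 * σ ^ 1 * T / 2) σ :=
    (((hasDerivAt_pow 2 σ).mul_const T).div_const 2).const_add (-Real.log K)
  have hv : HasDerivAt (fun s : ℝ => s * Real.sqrt T) (Real.sqrt T) σ := by
    simpa using (hasDerivAt_id σ).mul_const (Real.sqrt T)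
  have hd1 := hu.div hv hsT.ne'
  set D1 : ℝ := (2 * σ ^ 1 * T / 2 * (σ * Real.sqrt T) -
      (-Real.log K + σ ^ 2 * T / 2) * Real.sqrt T) / (σ * Real.sqrt T) ^ 2 with hD1
  set d1v : ℝ := (-Real.log K + σ ^ 2 * T / 2) / (σ * Real.sqrt T) with hd1v
  have hd2 := hd1.sub hv
  have hN1 := (stdNormalCDF_hasDerivAt d1v).comp σ hd1
  have hN2 := ((stdNormalCDF_hasDerivAt (d1v - σ * Real.sqrt T)).comp σ hd2).const_mul K
  have hsum := hN1.sub hN2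
  have hTT : Real.sqrt T ^ 2 = T := Real.sq_sqrt hT.le
  have key : d1v * (σ * Real.sqrt T) = -Real.log K + σ ^ 2 * T / 2 :=
    div_mul_cancel₀ _ hsT.ne'
  have hdsq : (d1v - σ * Real.sqrt T) ^ 2 = d1v ^ 2 + 2 * Real.log K := by
    linear_combination (-2 : ℝ) * key + σ ^ 2 * hTT
  have hexp : Real.exp (-(d1v) ^ 2 / 2) =
      K * Real.exp (-((d1v - σ * Real.sqrt T)) ^ 2 / 2) := by
    rw [show -(d1v) ^ 2 / 2 = -((d1v - σ * Real.sqrt T)) ^ 2 / 2 + Real.log K by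
      linear_combination (1/2 : ℝ) * hdsq, Real.exp_add, Real.exp_log hK]
    ring
  have hfn : (fun s : ℝ => stdNormalCDF ((-Real.log K + s ^ 2 * T / 2) / (s * Real.sqrt T)) -
      K * stdNormalCDF ((-Real.log K + s ^ 2 * T / 2) / (s * Real.sqrt T) - s * Real.sqrt T))
      = fun s => CBS T K s := by
    funext s; rw [CBS]
  rw [← hfn]
  refine hsum.congr_deriv ?_
  rw [hexp]
  ring

lemma tendsto_nhds_add_atTop {α : Type*} {f g : α → ℝ} {l : Filter α} {c : ℝ}
    (hf : Tendsto f l (𝓝 c)) (hg : Tendsto g l atTop) :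
    Tendsto (fun x => f x + g x) l atTop :=
  tendsto_atTop_add_left_of_le' l (c - 1) (hf.eventually (eventually_ge_nhds (by linarith))) hg

lemma tendsto_nhds_add_atBot {α : Type*} {f g : α → ℝ} {l : Filter α} {c : ℝ}
    (hf : Tendsto f l (𝓝 c)) (hg : Tendsto g l atBot) :
    Tendsto (fun x => f x + g x) l atBot :=
  tendsto_atBot_add_left_of_ge' l (c + 1) (hf.eventually (eventually_le_nhds (by linarith))) hg

lemma CBS_strictMonoOn {T K : ℝ} (hT : 0 < T) (hK : 0 < K) :
    StrictMonoOn (fun s => CBS T K s) (Ioi 0) := by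
  apply strictMonoOn_of_deriv_pos (convex_Ioi 0)
  · exact fun s hs => ((CBS_hasDerivAt hT hK (mem_Ioi.mp hs)).continuousAt).continuousWithinAt
  · intro s hs
    rw [interior_Ioi] at hs
    rw [(CBS_hasDerivAt hT hK (mem_Ioi.mp hs)).deriv]
    have h1 : 0 < Real.sqrt T := Real.sqrt_pos.2 hT
    positivity

lemma CBS_tendsto_atTop {T K : ℝ} (hT : 0 < T) (hK : 0 < K) :
    Tendsto (fun s => CBS T K s) atTop (𝓝 1) := by
  obtain ⟨u, hu, rfl⟩ : ∃ u : ℝ, 0 < u ∧ T = u ^ 2 :=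
    ⟨Real.sqrt T, Real.sqrt_pos.2 hT, (Real.sq_sqrt hT.le).symm⟩
  have hsq : Real.sqrt (u ^ 2) = u := Real.sqrt_sq hu.le
  have hsplit : ∀ s : ℝ, s ≠ 0 → (-Real.log K + s ^ 2 * u ^ 2 / 2) / (s * Real.sqrt (u ^ 2))
      = (-Real.log K / u) * s⁻¹ + (u / 2) * s := by
    intro s hs
    rw [hsq]
    field_simp
  have h1 : Tendsto (fun s : ℝ => (-Real.log K / u) * s⁻¹) atTop (𝓝 0) := by
    simpa using tendsto_inv_atTop_zero.const_mul (-Real.log K / u)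
  have h2 : Tendsto (fun s : ℝ => (u / 2) * s) atTop atTop :=
    Tendsto.const_mul_atTop (by positivity) tendsto_id
  have hd1 : Tendsto (fun s : ℝ => (-Real.log K + s ^ 2 * u ^ 2 / 2) / (s * Real.sqrt (u ^ 2)))
      atTop atTop := by
    refine (tendsto_nhds_add_atTop h1 h2).congr' ?_
    filter_upwards [eventually_gt_atTop (0:ℝ)] with s hs
    exact (hsplit s hs.ne').symm
  have hd2 : Tendsto (fun s : ℝ => (-Real.log K + s ^ 2 * u ^ 2 / 2) / (s * Real.sqrt (u ^ 2))
      - s * Real.sqrt (u ^ 2)) atTop atBot := by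
    have h2' : Tendsto (fun s : ℝ => (-(u / 2)) * s) atTop atBot :=
      Tendsto.const_mul_atTop_of_neg (by linarith) tendsto_id
    refine (tendsto_nhds_add_atBot h1 h2').congr' ?_
    filter_upwards [eventually_gt_atTop (0:ℝ)] with s hs
    rw [hsplit s hs.ne', hsq]
    ring
  have hA := stdNormalCDF_tendsto_atTop.comp hd1
  have hB := (stdNormalCDF_tendsto_atBot.comp hd2).const_mul K
  have := hA.sub hB
  simp only [Function.comp, mul_zero, sub_zero] at this
  simpa [CBS] using this

lemma CBS_tendsto_zero {T K : ℝ} (hT : 0 < T) (hK : 1 ≤ K) :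
    Tendsto (fun s => CBS T K s) (𝓝[>] (0:ℝ)) (𝓝 0) := by
  obtain ⟨u, hu, rfl⟩ : ∃ u : ℝ, 0 < u ∧ T = u ^ 2 :=
    ⟨Real.sqrt T, Real.sqrt_pos.2 hT, (Real.sq_sqrt hT.le).symm⟩
  have hsq : Real.sqrt (u ^ 2) = u := Real.sqrt_sq hu.le
  have hK0 : (0:ℝ) < K := lt_of_lt_of_le one_pos hK
  have hsplit : ∀ s : ℝ, s ≠ 0 → (-Real.log K + s ^ 2 * u ^ 2 / 2) / (s * Real.sqrt (u ^ 2))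
      = (-Real.log K / u) * s⁻¹ + (u / 2) * s := by
    intro s hs
    rw [hsq]
    field_simp
  rcases eq_or_lt_of_le hK with hK1 | hK1
  · -- K = 1
    subst hK1
    have hlin : ∀ c : ℝ, Tendsto (fun s : ℝ => c * s) (𝓝[>] (0:ℝ)) (𝓝 0) := by
      intro c
      have : Tendsto (fun s : ℝ => c * s) (𝓝 (0:ℝ)) (𝓝 (c * 0)) :=
        (continuous_const.mul continuous_id).tendsto 0
      rw [mul_zero] at this
      exact this.mono_left nhdsWithin_le_nhds
    have hA := (stdNormalCDF_continuous.tendsto 0).comp (hlin (u / 2))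
    have hB := (stdNormalCDF_continuous.tendsto 0).comp (hlin (-(u / 2)))
    have hs := hA.sub hB
    rw [sub_self] at hs
    refine hs.congr' ?_
    filter_upwards [self_mem_nhdsWithin] with s (hspos : s ∈ Ioi (0:ℝ))
    have hsne : s ≠ 0 := (mem_Ioi.mp hspos).ne'
    simp only [Function.comp, CBS]
    rw [hsplit s hsne, hsq]
    simp only [Real.log_one]
    ring_nf
  · -- K > 1
    have hlogpos : 0 < Real.log K := Real.log_pos hK1
    have hinv : Tendsto (fun s : ℝ => s⁻¹) (𝓝[>] (0:ℝ)) atTop := tendsto_inv_nhdsGT_zero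
    have h1 : Tendsto (fun s : ℝ => (-Real.log K / u) * s⁻¹) (𝓝[>] (0:ℝ)) atBot :=
      Tendsto.const_mul_atTop_of_neg (by
        apply div_neg_of_neg_of_pos <;> [linarith; exact hu]) hinv
    have h2 : ∀ c : ℝ, Tendsto (fun s : ℝ => c * s) (𝓝[>] (0:ℝ)) (𝓝 0) := by
      intro c
      have : Tendsto (fun s : ℝ => c * s) (𝓝 (0:ℝ)) (𝓝 (c * 0)) :=
        (continuous_const.mul continuous_id).tendsto 0
      rw [mul_zero] at this
      exact this.mono_left nhdsWithin_le_nhds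
    have hd1 : Tendsto (fun s : ℝ => (-Real.log K + s ^ 2 * u ^ 2 / 2) / (s * Real.sqrt (u ^ 2)))
        (𝓝[>] (0:ℝ)) atBot := by
      have := tendsto_nhds_add_atBot (h2 (u / 2)) h1
      refine this.congr' ?_
      filter_upwards [self_mem_nhdsWithin] with s (hs : s ∈ Ioi (0:ℝ))
      rw [hsplit s (mem_Ioi.mp hs).ne']
      ring
    have hd2 : Tendsto (fun s : ℝ => (-Real.log K + s ^ 2 * u ^ 2 / 2) / (s * Real.sqrt (u ^ 2))
        - s * Real.sqrt (u ^ 2)) (𝓝[>] (0:ℝ)) atBot := by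
      have := tendsto_nhds_add_atBot (h2 (-(u / 2))) h1
      refine this.congr' ?_
      filter_upwards [self_mem_nhdsWithin] with s (hs : s ∈ Ioi (0:ℝ))
      rw [hsplit s (mem_Ioi.mp hs).ne', hsq]
      ring
    have hA := stdNormalCDF_tendsto_atBot.comp hd1
    have hB := (stdNormalCDF_tendsto_atBot.comp hd2).const_mul K
    have := hA.sub hB
    simp only [Function.comp, mul_zero, sub_zero] at this
    simpa [CBS] using this

lemma CBS_symm {T K σ : ℝ} (hT : 0 < T) (hK : 0 < K) (hσ : 0 < σ) :
    K * CBS T (1/K) σ = CBS T K σ - (1 - K) := by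
  have hsT : 0 < σ * Real.sqrt T := by positivity
  have hTT : Real.sqrt T ^ 2 = T := Real.sq_sqrt hT.le
  have e1 : (-Real.log (1/K) + σ ^ 2 * T / 2) / (σ * Real.sqrt T)
      = -((-Real.log K + σ ^ 2 * T / 2) / (σ * Real.sqrt T) - σ * Real.sqrt T) := by
    rw [one_div, Real.log_inv]
    field_simp
    linear_combination (-2 * σ ^ 2) * hTT
  have e2 : (-Real.log (1/K) + σ ^ 2 * T / 2) / (σ * Real.sqrt T) - σ * Real.sqrt T
      = -((-Real.log K + σ ^ 2 * T / 2) / (σ * Real.sqrt T)) := by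
    rw [one_div, Real.log_inv]
    field_simp
    linear_combination (-2 * σ ^ 2) * hTT
  rw [CBS, CBS, e2, e1, stdNormalCDF_neg, stdNormalCDF_neg]
  field_simp
  ring


/-- for an asset price X with E X = 1 and mass m ∈ (0,1) at zero, the implied
volatility I_G of G(K) = K·P(1/K) exists (and is unique) for all K ≥ 1, and any implied
volatility of the call C(K) at strike K ≤ 1 coincides with I_G(1/K). -/
theorem implied_vol_symmetry
    {Ω : Type*} [MeasurableSpace Ω] (ℙ : Measure Ω) [IsProbabilityMeasure ℙ]
    (X : Ω → ℝ) (hXmeas : Measurable X) (hXpos : ∀ ω, 0 ≤ X ω)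
    (hXint : Integrable X ℙ) (hXmean : ∫ ω, X ω ∂ℙ = 1)
    (m : ℝ) (hm : m = (ℙ {ω | X ω = 0}).toReal) (hm₀ : 0 < m) (hm₁ : m < 1)
    (C P G : ℝ → ℝ)
    (hC : ∀ K, C K = ∫ ω, max (X ω - K) 0 ∂ℙ)
    (hP : ∀ K, P K = ∫ ω, max (K - X ω) 0 ∂ℙ)
    (hPpos : ∀ K, 0 < K → K < 1 → 0 < P K)
    (hG : ∀ K, 0 < K → G K = K * P (1 / K))
    (T : ℝ) (hT : 0 < T) :
    (∀ K : ℝ, 1 ≤ K → ∃! σ : ℝ, 0 < σ ∧ CBS T K σ = G K) ∧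
    (∀ K : ℝ, 0 < K → K ≤ 1 → ∀ σ τ : ℝ,
      0 < σ → CBS T K σ = C K → 0 < τ → CBS T (1 / K) τ = G (1 / K) → σ = τ) := by

  have hA : MeasurableSet {ω | X ω = 0} := hXmeas (measurableSet_singleton 0)
  -- integrability
  have hint1 : ∀ K : ℝ, Integrable (fun ω => max (X ω - K) 0) ℙ :=
    fun K => (hXint.sub (integrable_const K)).pos_part
  have hint2 : ∀ K : ℝ, Integrable (fun ω => max (K - X ω) 0) ℙ :=
    fun K => ((integrable_const K).sub hXint).pos_part
  -- put call parity
  have parity : ∀ K : ℝ, C K - P K = 1 - K := by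
    intro K
    rw [hC, hP, ← integral_sub (hint1 K) (hint2 K)]
    have hfun : (fun ω => max (X ω - K) 0 - max (K - X ω) 0) = fun ω => X ω - K := by
      funext ω
      rcases le_total (X ω) K with h | h
      · rw [max_eq_right (by linarith), max_eq_left (by linarith)]; ring
      · rw [max_eq_left (by linarith), max_eq_right (by linarith)]; ring
    rw [hfun, integral_sub hXint (integrable_const K), hXmean, integral_const]
    simp
  -- P 1 > 0
  have hP1 : 0 < P 1 := by
    have hle : ∀ ω, ({ω | X ω = 0}).indicator (fun _ => (1:ℝ)) ω ≤ max (1 - X ω) 0 := by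
      intro ω
      by_cases h : ω ∈ {ω | X ω = 0}
      · rw [Set.indicator_of_mem h]
        have : X ω = 0 := h
        rw [this]
        norm_num
      · rw [Set.indicator_of_notMem h]
        exact le_max_right _ _
    have hintind : Integrable (({ω | X ω = 0}).indicator (fun _ => (1:ℝ))) ℙ :=
      (integrable_const (1:ℝ)).indicator hA
    have h1 : ∫ ω, ({ω | X ω = 0}).indicator (fun _ => (1:ℝ)) ω ∂ℙ = m := by
      rw [MeasureTheory.integral_indicator_const _ hA, hm]
      simp [measureReal_def]
    have h2 := MeasureTheory.integral_mono hintind (hint2 1) hle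
    rw [hP]
    calc (0:ℝ) < m := hm₀
    _ = _ := h1.symm
    _ ≤ _ := h2
  -- P k < k for k > 0
  have hPlt : ∀ k : ℝ, 0 < k → P k < k := by
    intro k hk
    have hfun : (fun ω => min (X ω) k) = fun ω => k - max (k - X ω) 0 := by
      funext ω
      rcases le_total (X ω) k with h | h
      · rw [min_eq_left h, max_eq_left (by linarith)]; ring
      · rw [min_eq_right h, max_eq_right (by linarith)]; ring
    have hintmin : Integrable (fun ω => min (X ω) k) ℙ := by
      rw [hfun]; exact (integrable_const k).sub (hint2 k)
    have hnonneg : 0 ≤ fun ω => min (X ω) k := fun ω => le_min (hXpos ω) hk.le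
    have hsupp : Function.support (fun ω => min (X ω) k) = {ω | X ω = 0}ᶜ := by
      ext ω
      simp only [Function.mem_support, Set.mem_compl_iff, Set.mem_setOf_eq]
      constructor
      · intro h h0
        exact h (by rw [h0]; simp [min_eq_left hk.le])
      · intro h
        have hx : 0 < X ω := lt_of_le_of_ne (hXpos ω) (Ne.symm h)
        exact (lt_min hx hk).ne'
    have hmeaspos : 0 < ℙ (Function.support fun ω => min (X ω) k) := by
      rw [hsupp]
      rw [measure_compl hA (measure_ne_top ℙ _)]
      have hlt : ℙ {ω | X ω = 0} < 1 := by
        by_contra hc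
        push_neg at hc
        have : ℙ {ω | X ω = 0} = 1 := le_antisymm prob_le_one hc
        rw [hm, this] at hm₁
        norm_num at hm₁
      simpa [measure_univ] using tsub_pos_of_lt hlt
    have hpos : 0 < ∫ ω, min (X ω) k ∂ℙ :=
      (MeasureTheory.integral_pos_iff_support_of_nonneg hnonneg hintmin).2 hmeaspos
    have heval : ∫ ω, min (X ω) k ∂ℙ = k - P k := by
      rw [hfun, integral_sub (integrable_const k) (hint2 k), integral_const, hP]
      simp
    linarith [heval ▸ hpos]
  -- positivity and upper bound of G K for K ≥ 1
  have hGbounds : ∀ K : ℝ, 1 ≤ K → 0 < G K ∧ G K < 1 := by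
    intro K hK1
    have hK0 : (0:ℝ) < K := lt_of_lt_of_le one_pos hK1
    have hinv0 : 0 < 1 / K := by positivity
    have hPinv : 0 < P (1 / K) := by
      rcases eq_or_lt_of_le hK1 with h | h
      · rw [← h]; simpa using hP1
      · exact hPpos _ hinv0 ((div_lt_one hK0).2 h)
    constructor
    · rw [hG K hK0]; positivity
    · rw [hG K hK0]
      have := hPlt (1 / K) hinv0
      calc K * P (1 / K) < K * (1 / K) := by
            exact mul_lt_mul_of_pos_left this hK0
      _ = 1 := by field_simp
  constructor
  · -- existence and uniqueness of implied vol of G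
    intro K hK1
    have hK0 : (0:ℝ) < K := lt_of_lt_of_le one_pos hK1
    obtain ⟨ht0, ht1⟩ := hGbounds K hK1
    have hev1 : ∀ᶠ s in 𝓝[>] (0:ℝ), CBS T K s < G K :=
      (CBS_tendsto_zero hT hK1).eventually (eventually_lt_nhds ht0)
    obtain ⟨σ₁, hσ₁lt, hσ₁pos⟩ := (hev1.and self_mem_nhdsWithin).exists
    have hσ₁pos : (0:ℝ) < σ₁ := hσ₁pos
    have hev2 : ∀ᶠ s in atTop, G K < CBS T K s :=
      (CBS_tendsto_atTop hT hK0).eventually (eventually_gt_nhds ht1)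
    obtain ⟨σ₂, hσ₂gt, hσ₂ge⟩ := (hev2.and (eventually_ge_atTop σ₁)).exists
    have hcont : ContinuousOn (fun s => CBS T K s) (Icc σ₁ σ₂) := fun s hs =>
      ((CBS_hasDerivAt hT hK0 (lt_of_lt_of_le hσ₁pos hs.1)).continuousAt).continuousWithinAt
    have hmem : G K ∈ Icc (CBS T K σ₁) (CBS T K σ₂) := ⟨hσ₁lt.le, hσ₂gt.le⟩
    obtain ⟨σ, hσmem, hσeq⟩ := intermediate_value_Icc hσ₂ge hcont hmem
    have hσpos : 0 < σ := lt_of_lt_of_le hσ₁pos hσmem.1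
    refine ⟨σ, ⟨hσpos, hσeq⟩, ?_⟩
    rintro y ⟨hypos, hyeq⟩
    exact (CBS_strictMonoOn hT hK0).injOn (mem_Ioi.mpr hypos) (mem_Ioi.mpr hσpos)
      (hyeq.trans hσeq.symm)
  · -- symmetry
    intro K hK0 hK1 σ τ hσ hCeq hτ hGeq
    have hinvK : (1:ℝ) ≤ 1 / K := (le_div_iff₀ hK0).2 (by linarith)
    have hinv0 : (0:ℝ) < 1 / K := by positivity
    have hsymm := CBS_symm hT hK0 hσ
    have hPC := parity K
    have hGval : G (1 / K) = (1 / K) * P K := by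
      rw [hG _ hinv0, one_div_one_div]
    have hKG : CBS T (1 / K) σ = G (1 / K) := by
      have : K * CBS T (1 / K) σ = P K := by
        rw [hsymm, hCeq]; linarith
      rw [hGval]
      field_simp
      linarith [this]
    exact (CBS_strictMonoOn hT hinv0).injOn (mem_Ioi.mpr hσ) (mem_Ioi.mpr hτ)
      (hKG.trans hGeq.symm)
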